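/- Let λ ∈ (0,1), d > 0. For each environment consisting of a strictly increasing sequence (x_k) with x_0 = 0 and gaps ≥ d, and u ≡ 0, consider the one-step jump probability to the right p(ω) := P_0^ω(X_1 ≥ 1) = (∑_{j≥1} e^{-(1-λ)x_j}) / (∑_{j≥1} e^{-(1-λ)x_j} + ∑_{j≤-1} e^{(1+λ)x_j}). Writing Z_0 = x_1 and Z_{-1} = -x_{-1}, there exist constants K₁, K₂ > 0 depending only on d, λ such that K₂ · e^{-(1-λ)Z_0} / (e^{-(1+λ)Z_{-1}} + e^{-(1-λ)Z_0}) ≤ p(ω) ≤ K₁ · e^{-(1-λ)Z_0 + (1+λ)Z_{-1}}. In particular 1/p(ω) is comparable, up to multiplicative constants and an additive constant, to e^{(1-λ)Z_0 - (1+λ)Z_{-1}}. -/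

import Mathlib

private lemma gap_lower (x : ℤ → ℝ) (d : ℝ) (h : ∀ k : ℤ, d ≤ x (k + 1) - x k) (k : ℤ) :
    ∀ j : ℕ, x k + j * d ≤ x (k + j) := by
  intro j
  induction j with
  | zero => simp
  | succ n ih =>
      have h2 := h (k + n)
      have : (k + (n + 1 : ℕ) : ℤ) = (k + n) + 1 := by push_cast; ring
      rw [this]
      push_cast
      linarith

set_option maxHeartbeats 1000000 in
/-- With `u ≡ 0`, `p(ω) = S⁺/(S⁺+S⁻)` where `S⁺ = ∑_{j≥1} e^{-(1-λ)x_j}` and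
`S⁻ = ∑_{j≤-1} e^{(1+λ)x_j}`, and `Z_0 = x_1`, `Z_{-1} = -x_{-1}`, there are constants
`K₁, K₂ > 0` depending only on `d, λ` with
`K₂ e^{-(1-λ)Z₀}/(e^{-(1+λ)Z₋₁} + e^{-(1-λ)Z₀}) ≤ p(ω) ≤ K₁ e^{-(1-λ)Z₀+(1+λ)Z₋₁}`;
in particular `1/p(ω)` is comparable to `e^{(1-λ)Z₀-(1+λ)Z₋₁}` up to multiplicative and
additive constants. -/
theorem stmt16 (d lam : ℝ) (hd : 0 < d) (hlam0 : 0 < lam) (hlam1 : lam < 1) :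
    ∃ K₁ K₂ K₃ K₄ : ℝ, 0 < K₁ ∧ 0 < K₂ ∧ 0 < K₃ ∧ 0 < K₄ ∧
      ∀ x : ℤ → ℝ, StrictMono x → x 0 = 0 → (∀ k : ℤ, d ≤ x (k + 1) - x k) →
        ∀ Splus Sminus p Z₀ Zm₁ : ℝ,
          Splus = (∑' j : ℕ, Real.exp (-(1 - lam) * x (j + 1))) →
          Sminus = (∑' j : ℕ, Real.exp ((1 + lam) * x (-1 - j))) →
          p = Splus / (Splus + Sminus) →
          Z₀ = x 1 → Zm₁ = -x (-1) →
          (K₂ * (Real.exp (-(1 - lam) * Z₀)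
              / (Real.exp (-(1 + lam) * Zm₁) + Real.exp (-(1 - lam) * Z₀))) ≤ p) ∧
          (p ≤ K₁ * Real.exp (-(1 - lam) * Z₀ + (1 + lam) * Zm₁)) ∧
          (1 / p ≤ K₃ * Real.exp ((1 - lam) * Z₀ - (1 + lam) * Zm₁) + K₄) ∧
          (Real.exp ((1 - lam) * Z₀ - (1 + lam) * Zm₁) ≤ K₃ * (1 / p) + K₄) := by
  set C : ℝ := (1 - Real.exp (-(1 - lam) * d))⁻¹ with hCdef
  set C' : ℝ := (1 - Real.exp (-(1 + lam) * d))⁻¹ with hC'def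
  have hr1 : Real.exp (-(1 - lam) * d) < 1 := by
    rw [Real.exp_lt_one_iff]; nlinarith
  have hr2 : Real.exp (-(1 + lam) * d) < 1 := by
    rw [Real.exp_lt_one_iff]; nlinarith
  have hC : 0 < C := by rw [hCdef]; exact inv_pos.mpr (by linarith)
  have hC' : 0 < C' := by rw [hC'def]; exact inv_pos.mpr (by linarith)
  set M : ℝ := max C C' with hMdef
  have hM : 0 < M := lt_of_lt_of_le hC (le_max_left _ _)
  have hCM : C ≤ M := le_max_left _ _
  have hC'M : C' ≤ M := le_max_right _ _
  refine ⟨C, M⁻¹, M, 1, hC, by positivity, hM, one_pos, ?_⟩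
  intro x hmono hx0 hgap Splus Sminus p Z₀ Zm₁ hSp hSm hp hZ hZm
  subst hSp hSm hp hZ hZm
  set E₀ : ℝ := Real.exp (-(1 - lam) * x 1) with hE₀
  set Em : ℝ := Real.exp (-(1 + lam) * -x (-1)) with hEm
  have hE₀pos : 0 < E₀ := Real.exp_pos _
  have hEmpos : 0 < Em := Real.exp_pos _
  -- bounds on Splus terms
  have htermp : ∀ j : ℕ, Real.exp (-(1 - lam) * x (j + 1)) ≤
      E₀ * Real.exp (-(1 - lam) * d) ^ j := by
    intro j
    have h1 : x 1 + j * d ≤ x ((1 : ℤ) + j) := gap_lower x d hgap 1 j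
    have h2 : ((j : ℤ) + 1) = (1 : ℤ) + j := by ring
    rw [h2]
    calc Real.exp (-(1 - lam) * x (1 + j))
        ≤ Real.exp (-(1 - lam) * (x 1 + j * d)) := by
          apply Real.exp_le_exp.mpr; nlinarith
      _ = E₀ * Real.exp (-(1 - lam) * d) ^ j := by
          rw [hE₀, ← Real.exp_nat_mul, ← Real.exp_add]; congr 1; ring
  have htermm : ∀ j : ℕ, Real.exp ((1 + lam) * x (-1 - j)) ≤
      Em * Real.exp (-(1 + lam) * d) ^ j := by
    intro j
    have h1 : x (-1 - j) + j * d ≤ x ((-1 - j) + j) := gap_lower x d hgap _ j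
    have h2 : ((-1 - j : ℤ) + j) = (-1 : ℤ) := by ring
    rw [h2] at h1
    calc Real.exp ((1 + lam) * x (-1 - j))
        ≤ Real.exp ((1 + lam) * (x (-1) - j * d)) := by
          apply Real.exp_le_exp.mpr; nlinarith
      _ = Em * Real.exp (-(1 + lam) * d) ^ j := by
          rw [hEm, ← Real.exp_nat_mul, ← Real.exp_add]; congr 1; ring
  have hgsum1 : Summable (fun j : ℕ => E₀ * Real.exp (-(1 - lam) * d) ^ j) :=
    (summable_geometric_of_lt_one (Real.exp_pos _).le hr1).mul_left _
  have hgsum2 : Summable (fun j : ℕ => Em * Real.exp (-(1 + lam) * d) ^ j) :=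
    (summable_geometric_of_lt_one (Real.exp_pos _).le hr2).mul_left _
  have hsump : Summable (fun j : ℕ => Real.exp (-(1 - lam) * x (j + 1))) :=
    Summable.of_nonneg_of_le (fun j => (Real.exp_pos _).le) htermp hgsum1
  have hsumm : Summable (fun j : ℕ => Real.exp ((1 + lam) * x (-1 - j))) :=
    Summable.of_nonneg_of_le (fun j => (Real.exp_pos _).le) htermm hgsum2
  set Sp : ℝ := ∑' j : ℕ, Real.exp (-(1 - lam) * x (j + 1)) with hSpd
  set Sm : ℝ := ∑' j : ℕ, Real.exp ((1 + lam) * x (-1 - j)) with hSmd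
  have hSpub : Sp ≤ C * E₀ := by
    rw [hSpd]
    calc (∑' j : ℕ, Real.exp (-(1 - lam) * x (j + 1)))
        ≤ ∑' j : ℕ, E₀ * Real.exp (-(1 - lam) * d) ^ j :=
          Summable.tsum_le_tsum htermp hsump hgsum1
      _ = E₀ * (1 - Real.exp (-(1 - lam) * d))⁻¹ := by
          rw [tsum_mul_left, tsum_geometric_of_lt_one (Real.exp_pos _).le hr1]
      _ = C * E₀ := by rw [hCdef]; ring
  have hSplb : E₀ ≤ Sp := by
    have h := Summable.le_tsum hsump 0 (fun j _ => (Real.exp_pos _).le)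
    have e : (((0 : ℕ) : ℤ) + 1) = (1 : ℤ) := by norm_num
    rw [e] at h
    exact h
  have hSmub : Sm ≤ C' * Em := by
    rw [hSmd]
    calc (∑' j : ℕ, Real.exp ((1 + lam) * x (-1 - j)))
        ≤ ∑' j : ℕ, Em * Real.exp (-(1 + lam) * d) ^ j :=
          Summable.tsum_le_tsum htermm hsumm hgsum2
      _ = Em * (1 - Real.exp (-(1 + lam) * d))⁻¹ := by
          rw [tsum_mul_left, tsum_geometric_of_lt_one (Real.exp_pos _).le hr2]
      _ = C' * Em := by rw [hC'def]; ring
  have hSmlb : Em ≤ Sm := by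
    have h := Summable.le_tsum hsumm 0 (fun j _ => (Real.exp_pos _).le)
    have e : ((-1 : ℤ) - ((0 : ℕ) : ℤ)) = (-1 : ℤ) := by norm_num
    rw [e] at h
    refine le_trans (le_of_eq ?_) h
    rw [hEm]; congr 1; ring
  have hSppos : 0 < Sp := lt_of_lt_of_le hE₀pos hSplb
  have hSmpos : 0 < Sm := lt_of_lt_of_le hEmpos hSmlb
  have hSum : 0 < Sp + Sm := by linarith
  -- exp identities
  have hT1 : Real.exp (-(1 - lam) * x 1 + (1 + lam) * -x (-1)) * Em = E₀ := by
    rw [hEm, hE₀, ← Real.exp_add]; congr 1; ring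
  set T : ℝ := Real.exp ((1 - lam) * x 1 - (1 + lam) * -x (-1)) with hTdef
  have hTpos : 0 < T := Real.exp_pos _
  have hT2 : T * E₀ = Em := by
    rw [hTdef, hEm, hE₀, ← Real.exp_add]; congr 1; ring
  have hinv : 1 / (Sp / (Sp + Sm)) = (Sp + Sm) / Sp := one_div_div _ _
  refine ⟨?_, ?_, ?_, ?_⟩
  · -- lower bound
    have heq : M⁻¹ * (E₀ / (Em + E₀)) = E₀ / (M * (Em + E₀)) := by
      field_simp
    rw [heq, div_le_div_iff₀ (by positivity) hSum]
    have hA : Sp + Sm ≤ M * (Em + E₀) := by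
      have h1 : C * E₀ ≤ M * E₀ := mul_le_mul_of_nonneg_right hCM hE₀pos.le
      have h2 : C' * Em ≤ M * Em := mul_le_mul_of_nonneg_right hC'M hEmpos.le
      nlinarith
    calc E₀ * (Sp + Sm) ≤ E₀ * (M * (Em + E₀)) :=
          mul_le_mul_of_nonneg_left hA hE₀pos.le
      _ ≤ Sp * (M * (Em + E₀)) := mul_le_mul_of_nonneg_right hSplb (by positivity)
  · -- upper bound
    have hEeq : Real.exp (-(1 - lam) * x 1 + (1 + lam) * -x (-1)) = E₀ / Em := by
      rw [eq_div_iff hEmpos.ne']; exact hT1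
    rw [hEeq, mul_div_assoc', div_le_div_iff₀ hSum hEmpos]
    have hkey : Sp * Em ≤ (C * E₀) * Sm :=
      mul_le_mul hSpub hSmlb hEmpos.le (by positivity)
    nlinarith
  · rw [hinv, div_le_iff₀ hSppos]
    have h1 : Sm ≤ C' * (T * E₀) := by rw [hT2]; exact hSmub
    have h2 : C' * (T * E₀) ≤ M * (T * E₀) :=
      mul_le_mul_of_nonneg_right hC'M (by positivity)
    have h3 : M * (T * E₀) ≤ M * (T * Sp) :=
      mul_le_mul_of_nonneg_left (mul_le_mul_of_nonneg_left hSplb hTpos.le) hM.le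
    nlinarith
  · rw [hinv]
    have hkey : T * Sp ≤ M * (Sp + Sm) := by
      have h1 : T * Sp ≤ T * (C * E₀) := mul_le_mul_of_nonneg_left hSpub hTpos.le
      have h2 : C * (T * E₀) ≤ C * Sm := by
        rw [hT2]; exact mul_le_mul_of_nonneg_left hSmlb hC.le
      have h3 : C * Sm ≤ M * Sm := mul_le_mul_of_nonneg_right hCM hSmpos.le
      nlinarith
    have : T ≤ M * ((Sp + Sm) / Sp) := by
      rw [mul_div_assoc', le_div_iff₀ hSppos]
      linarith [hkey]
    linarith
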